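/- Let d ≥ 0 and 1 ≤ k ≤ d+1 be integers. The ℂ-subspace of V_d consisting of those triples (a₀,a₁,a₂) for which both dehomogenizations a₀(x,y,1) and a₁(x,y,1) vanish to order at least k at the origin (equivalently, for which the corresponding foliation has a singularity of order ≥ k at the point p = [0:0:1]) has dimension (d² + 4d + 3) − k(k+1). (This is the fiber of the bundle M_k; it yields that the locus M_k of foliations with a singularity of order ≥ k has codimension k(k+1) − 2 in P^N.) -/

import Mathlib

open MvPolynomial

abbrev P3 := MvPolynomial (Fin 3) ℂ
abbrev P2 := MvPolynomial (Fin 2) ℂ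

/-- The linear "Euler" map sending a triple `(a₀,a₁,a₂)` of polynomials to
`a₀z₀ + a₁z₁ + a₂z₂`. -/
noncomputable def eulerMap :
    (Fin 3 → MvPolynomial (Fin 3) ℂ) →ₗ[ℂ] MvPolynomial (Fin 3) ℂ :=
  ∑ i : Fin 3, (LinearMap.mulRight ℂ (X i : MvPolynomial (Fin 3) ℂ)).comp (LinearMap.proj i)

/-- The space `V_d` of triples `(a₀,a₁,a₂)` of homogeneous polynomials of
degree `d+1` in `ℂ[z₀,z₁,z₂]` satisfying `a₀z₀ + a₁z₁ + a₂z₂ = 0`. -/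
noncomputable def foliationSpace (d : ℕ) : Submodule ℂ (Fin 3 → MvPolynomial (Fin 3) ℂ) :=
  (⨅ i : Fin 3, Submodule.comap (LinearMap.proj i)
      (homogeneousSubmodule (Fin 3) ℂ (d + 1))) ⊓ LinearMap.ker eulerMap

/-- Dehomogenization `p(z₀,z₁,z₂) ↦ p(x,y,1)` as a linear map. -/
noncomputable def dehom : MvPolynomial (Fin 3) ℂ →ₗ[ℂ] MvPolynomial (Fin 2) ℂ :=
  (aeval ![X 0, X 1, 1] : MvPolynomial (Fin 3) ℂ →ₐ[ℂ] MvPolynomial (Fin 2) ℂ).toLinearMap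

/-- The subspace of polynomials in `ℂ[x,y]` vanishing to order `≥ k`
at the origin: all homogeneous components of degree `< k` vanish. -/
noncomputable def vanishToOrder (k : ℕ) : Submodule ℂ (MvPolynomial (Fin 2) ℂ) :=
  ⨅ n ∈ Finset.range k, LinearMap.ker (homogeneousComponent n :
    MvPolynomial (Fin 2) ℂ →ₗ[ℂ] MvPolynomial (Fin 2) ℂ)

/-- The fiber of `M_k`: triples in `V_d` whose dehomogenized coefficients
`a₀(x,y,1)`, `a₁(x,y,1)` vanish to order `≥ k` at the origin. -/
noncomputable def MkFiber (d k : ℕ) : Submodule ℂ (Fin 3 → MvPolynomial (Fin 3) ℂ) :=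
  foliationSpace d
    ⊓ Submodule.comap (dehom.comp (LinearMap.proj 0)) (vanishToOrder k)
    ⊓ Submodule.comap (dehom.comp (LinearMap.proj 1)) (vanishToOrder k)


/-- exponent triple -/
noncomputable def mk3 (i j m : ℕ) : Fin 3 →₀ ℕ :=
  Finsupp.single 0 i + Finsupp.single 1 j + Finsupp.single 2 m

noncomputable def mk2 (i j : ℕ) : Fin 2 →₀ ℕ :=
  Finsupp.single 0 i + Finsupp.single 1 j

@[simp] lemma mk3_apply0 (i j m : ℕ) : mk3 i j m 0 = i := by simp [mk3]
@[simp] lemma mk3_apply1 (i j m : ℕ) : mk3 i j m 1 = j := by simp [mk3]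
@[simp] lemma mk3_apply2 (i j m : ℕ) : mk3 i j m 2 = m := by simp [mk3]
@[simp] lemma mk2_apply0 (i j : ℕ) : mk2 i j 0 = i := by simp [mk2]
@[simp] lemma mk2_apply1 (i j : ℕ) : mk2 i j 1 = j := by simp [mk2]

lemma eq_mk3 (e : Fin 3 →₀ ℕ) : e = mk3 (e 0) (e 1) (e 2) := by
  ext a; fin_cases a <;> simp [mk3]

lemma degree3 (e : Fin 3 →₀ ℕ) : e.degree = e 0 + e 1 + e 2 := by
  rw [Finsupp.degree_apply, Finset.sum_subset (Finset.subset_univ e.support)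
    (by intro x _ hx; simpa using Finsupp.notMem_support_iff.mp hx)]
  simp [Fin.sum_univ_three]

lemma degree2 (e : Fin 2 →₀ ℕ) : e.degree = e 0 + e 1 := by
  rw [Finsupp.degree_apply, Finset.sum_subset (Finset.subset_univ e.support)
    (by intro x _ hx; simpa using Finsupp.notMem_support_iff.mp hx)]
  simp [Fin.sum_univ_two]

lemma monomial_mk3 (i j m : ℕ) (r : ℂ) :
    (monomial (mk3 i j m) r : P3) = C r * X 0 ^ i * X 1 ^ j * X 2 ^ m := by
  rw [X_pow_eq_monomial, X_pow_eq_monomial, X_pow_eq_monomial, C_apply,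
    monomial_mul, monomial_mul, monomial_mul, mk3]
  simp

lemma monomial_mk2 (i j : ℕ) (r : ℂ) :
    (monomial (mk2 i j) r : P2) = C r * X 0 ^ i * X 1 ^ j := by
  rw [X_pow_eq_monomial, X_pow_eq_monomial, C_apply, monomial_mul, monomial_mul, mk2]
  simp

lemma aeval3_monomial {S : Type*} [CommRing S] [Algebra ℂ S] (v : Fin 3 → S)
    (e : Fin 3 →₀ ℕ) (r : ℂ) :
    aeval v (monomial e r : P3) = algebraMap ℂ S r * v 0 ^ e 0 * v 1 ^ e 1 * v 2 ^ e 2 := by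
  rw [aeval_monomial, Finsupp.prod_fintype _ _ (fun i => pow_zero (v i)), Fin.prod_univ_three,
    mul_assoc, mul_assoc, mul_assoc]

lemma dehom_monomial (e : Fin 3 →₀ ℕ) (r : ℂ) :
    dehom (monomial e r) = monomial (mk2 (e 0) (e 1)) r := by
  show aeval ![X 0, X 1, 1] (monomial e r) = _
  rw [aeval3_monomial]
  rw [monomial_mk2]
  norm_num
  rw [show (![X 0, X 1, 1] : Fin 3 → P2) 2 = 1 from rfl, one_pow, mul_one]


/-- substitute z₂ = 0 -/
noncomputable def sub2 : P3 →ₐ[ℂ] P3 := aeval ![X 0, X 1, 0]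
/-- substitute z₁ = 0 -/
noncomputable def sub1 : P3 →ₐ[ℂ] P3 := aeval ![X 0, 0, X 2]

lemma modMonomial_monomial' (e s : Fin 3 →₀ ℕ) (r : ℂ) :
    (monomial e r : P3).modMonomial s = if s ≤ e then 0 else monomial e r := by
  by_cases hs : s ≤ e
  · rw [if_pos hs]
    ext f
    by_cases h : s ≤ f
    · rw [coeff_modMonomial_of_le _ h, coeff_zero]
    · rw [coeff_modMonomial_of_not_le _ h, coeff_zero, coeff_monomial, if_neg]
      rintro rfl; exact h hs
  · rw [if_neg hs]
    ext f
    by_cases h : s ≤ f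
    · rw [coeff_modMonomial_of_le _ h, coeff_monomial, if_neg]
      rintro rfl; exact hs h
    · rw [coeff_modMonomial_of_not_le _ h]

lemma sub2_eq_modMonomial (p : P3) : sub2 p = p.modMonomial (Finsupp.single 2 1) := by
  induction p using MvPolynomial.induction_on' with
  | monomial e r =>
    rw [modMonomial_monomial', sub2, aeval3_monomial]
    have h2 : Finsupp.single 2 1 ≤ e ↔ 1 ≤ e 2 := Finsupp.single_le_iff
    by_cases h : 1 ≤ e 2
    · rw [if_pos (h2.mpr h)]
      simp [zero_pow (by omega : e 2 ≠ 0)]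
    · rw [if_neg (fun hh => h (h2.mp hh))]
      have he2 : e 2 = 0 := by omega
      conv_rhs => rw [eq_mk3 e, he2]
      rw [monomial_mk3]
      simp [he2]
  | add p q hp hq =>
    rw [map_add, hp, hq]
    ext f
    by_cases h : Finsupp.single 2 1 ≤ f <;>
      simp [coeff_modMonomial_of_le, coeff_modMonomial_of_not_le, h, coeff_add]

lemma sub1_eq_modMonomial (p : P3) : sub1 p = p.modMonomial (Finsupp.single 1 1) := by
  induction p using MvPolynomial.induction_on' with
  | monomial e r =>
    rw [modMonomial_monomial', sub1, aeval3_monomial]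
    have h2 : Finsupp.single 1 1 ≤ e ↔ 1 ≤ e 1 := Finsupp.single_le_iff
    by_cases h : 1 ≤ e 1
    · rw [if_pos (h2.mpr h)]
      simp [zero_pow (by omega : e 1 ≠ 0)]
    · rw [if_neg (fun hh => h (h2.mp hh))]
      have he1 : e 1 = 0 := by omega
      conv_rhs => rw [eq_mk3 e, he1]
      rw [monomial_mk3]
      simp [he1]
  | add p q hp hq =>
    rw [map_add, hp, hq]
    ext f
    by_cases h : Finsupp.single 1 1 ≤ f <;>
      simp [coeff_modMonomial_of_le, coeff_modMonomial_of_not_le, h, coeff_add]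

lemma decomp2 (p : P3) : p = X 2 * p.divMonomial (Finsupp.single 2 1) + sub2 p := by
  rw [sub2_eq_modMonomial]
  exact (divMonomial_add_modMonomial_single p 2).symm

lemma decomp1 (p : P3) : p = X 1 * p.divMonomial (Finsupp.single 1 1) + sub1 p := by
  rw [sub1_eq_modMonomial]
  exact (divMonomial_add_modMonomial_single p 1).symm

lemma mem_span_monomial {E : Set (Fin 3 →₀ ℕ)} {p : P3} (h : ↑p.support ⊆ E) :
    p ∈ Submodule.span ℂ ((fun e => (monomial e (1:ℂ) : P3)) '' E) := by
  rw [p.as_sum]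
  refine Submodule.sum_mem _ fun e he => ?_
  have : (monomial e (coeff e p) : P3) = coeff e p • monomial e 1 := by
    rw [smul_monomial, smul_eq_mul, mul_one]
  rw [this]
  exact Submodule.smul_mem _ _ (Submodule.subset_span ⟨e, h he, rfl⟩)

lemma support_subset_of_mem_span {E : Set (Fin 3 →₀ ℕ)} {p : P3}
    (h : p ∈ Submodule.span ℂ ((fun e => (monomial e (1:ℂ) : P3)) '' E)) :
    ↑p.support ⊆ E := by
  induction h using Submodule.span_induction with
  | mem x hx =>
    obtain ⟨e, he, rfl⟩ := hx
    refine subset_trans ?_ (Set.singleton_subset_iff.mpr he)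
    intro f hf
    simp only [Finset.coe_subset, Finset.mem_coe, MvPolynomial.mem_support_iff] at hf
    rw [coeff_monomial] at hf
    by_contra hne
    simp only [Set.mem_singleton_iff] at hne
    rw [if_neg (fun a => hne a.symm)] at hf
    exact hf rfl
  | zero => simp
  | add x y _ _ hx hy =>
    intro f hf
    rcases Finset.mem_union.mp (MvPolynomial.support_add (Finset.mem_coe.mp hf)) with h | h
    · exact hx h
    · exact hy h
  | smul c x _ hx =>
    intro f hf
    exact hx (MvPolynomial.support_smul (Finset.mem_coe.mp hf))

lemma sub2_eq_self {p : P3} (h : ∀ e ∈ p.support, e 2 = 0) : sub2 p = p := by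
  rw [sub2_eq_modMonomial]
  ext f
  by_cases hf : Finsupp.single 2 1 ≤ f
  · rw [coeff_modMonomial_of_le _ hf]
    have : f ∉ p.support := by
      intro hs
      have := h f hs
      have := (Finsupp.single_le_iff).mp hf
      omega
    rw [MvPolynomial.notMem_support_iff] at this
    rw [this]
  · rw [coeff_modMonomial_of_not_le _ hf]

/-- Index set for `g₀, g₁`: exponents of degree `d` with `e 0 + e 1 ≥ k`. -/
noncomputable def TF (d k : ℕ) : Finset (Fin 3 →₀ ℕ) :=
  ((Finset.Ico k (d+1)).biUnion Finset.HasAntidiagonal.antidiagonal).image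
    (fun p => mk3 p.1 p.2 (d - p.1 - p.2))

/-- Index set for `c`: exponents of degree `d` with `e 2 = 0`. -/
noncomputable def CF (d : ℕ) : Finset (Fin 3 →₀ ℕ) :=
  (Finset.HasAntidiagonal.antidiagonal d).image (fun p => mk3 p.1 p.2 0)

lemma mem_TF {d k : ℕ} {e : Fin 3 →₀ ℕ} :
    e ∈ TF d k ↔ (e 0 + e 1 + e 2 = d ∧ k ≤ e 0 + e 1) := by
  constructor
  · rintro he
    obtain ⟨p, hp, rfl⟩ := Finset.mem_image.mp he
    obtain ⟨n, hn, hp2⟩ := Finset.mem_biUnion.mp hp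
    rw [Finset.HasAntidiagonal.mem_antidiagonal] at hp2
    rw [Finset.mem_Ico] at hn
    simp only [mk3_apply0, mk3_apply1, mk3_apply2]
    omega
  · rintro ⟨h1, h2⟩
    refine Finset.mem_image.mpr ⟨(e 0, e 1), ?_, ?_⟩
    · refine Finset.mem_biUnion.mpr ⟨e 0 + e 1, Finset.mem_Ico.mpr ⟨h2, by omega⟩, ?_⟩
      exact Finset.HasAntidiagonal.mem_antidiagonal.mpr rfl
    · rw [show d - e 0 - e 1 = e 2 by omega]
      exact (eq_mk3 e).symm

lemma mem_CF {d : ℕ} {e : Fin 3 →₀ ℕ} :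
    e ∈ CF d ↔ (e 0 + e 1 = d ∧ e 2 = 0) := by
  constructor
  · rintro he
    obtain ⟨p, hp, rfl⟩ := Finset.mem_image.mp he
    rw [Finset.HasAntidiagonal.mem_antidiagonal] at hp
    simp only [mk3_apply0, mk3_apply1, mk3_apply2]
    exact ⟨hp, trivial⟩
  · rintro ⟨h1, h2⟩
    refine Finset.mem_image.mpr ⟨(e 0, e 1), Finset.HasAntidiagonal.mem_antidiagonal.mpr h1, ?_⟩
    rw [← h2]
    exact (eq_mk3 e).symm

lemma card_TF {d k : ℕ} (hk : k ≤ d + 1) : (TF d k).card * 2 = (d+1)*(d+2) - k*(k+1) := by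
  have hinj : Function.Injective (fun p : ℕ × ℕ => mk3 p.1 p.2 (d - p.1 - p.2)) := by
    intro p q hpq
    have h0 := congrArg (fun e => e 0) hpq
    have h1 := congrArg (fun e => e 1) hpq
    simp only [mk3_apply0, mk3_apply1] at h0 h1
    exact Prod.ext h0 h1
  have hdisj : ∀ x ∈ Finset.Ico k (d+1), ∀ y ∈ Finset.Ico k (d+1), x ≠ y →
      Disjoint (Finset.HasAntidiagonal.antidiagonal x) (Finset.HasAntidiagonal.antidiagonal y) := by
    intro x _ y _ hxy
    rw [Finset.disjoint_left]
    intro a ha hb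
    rw [Finset.HasAntidiagonal.mem_antidiagonal] at ha hb
    omega
  rw [TF, Finset.card_image_of_injective _ hinj, Finset.card_biUnion hdisj]
  have hc : ∀ n ∈ Finset.Ico k (d+1), (Finset.HasAntidiagonal.antidiagonal n).card = n + 1 :=
    fun n _ => Finset.Nat.card_antidiagonal n
  rw [Finset.sum_congr rfl hc]
  have h1 : ∀ m : ℕ, (∑ n ∈ Finset.Ico 0 m, (n+1)) * 2 = m * (m+1) := by
    intro m
    rw [← Finset.range_eq_Ico]
    induction m with
    | zero => simp
    | succ m ih => rw [Finset.sum_range_succ, add_mul, ih]; ring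
  have key : (∑ n ∈ Finset.Ico 0 k, (n+1)) + ∑ n ∈ Finset.Ico k (d+1), (n+1)
      = ∑ n ∈ Finset.Ico 0 (d+1), (n+1) := Finset.sum_Ico_consecutive _ (Nat.zero_le k) hk
  rw [← h1 k, ← h1 (d + 1)]
  omega

lemma card_CF {d : ℕ} : (CF d).card = d + 1 := by
  have hinj : Function.Injective (fun p : ℕ × ℕ => mk3 p.1 p.2 0) := by
    intro p q hpq
    have h0 := congrArg (fun e => e 0) hpq
    have h1 := congrArg (fun e => e 1) hpq
    simp only [mk3_apply0, mk3_apply1] at h0 h1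
    exact Prod.ext h0 h1
  rw [CF, Finset.card_image_of_injective _ hinj, Finset.Nat.card_antidiagonal]

noncomputable def Tsub (d k : ℕ) : Submodule ℂ P3 :=
  Submodule.span ℂ ((fun e => (monomial e (1:ℂ) : P3)) '' ↑(TF d k))

noncomputable def Csub (d : ℕ) : Submodule ℂ P3 :=
  Submodule.span ℂ ((fun e => (monomial e (1:ℂ) : P3)) '' ↑(CF d))

lemma finrank_span_monomials (E : Finset (Fin 3 →₀ ℕ)) :
    Module.finrank ℂ (Submodule.span ℂ ((fun e => (monomial e (1:ℂ) : P3)) '' ↑E)) = E.card := by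
  classical
  have li : LinearIndependent ℂ (fun x : ↑E => (monomial (↑x) (1:ℂ) : P3)) := by
    have := (basisMonomials (Fin 3) ℂ).linearIndependent.comp
      ((↑) : ↑E → (Fin 3 →₀ ℕ)) Subtype.val_injective
    have hb := coe_basisMonomials (Fin 3) ℂ
    rw [show (fun x : ↑E => (monomial (↑x) (1:ℂ) : P3))
      = (fun x : ↑E => (basisMonomials (Fin 3) ℂ) ↑x) by funext x; rw [hb]]
    exact this
  have h := finrank_span_eq_card li
  rw [Fintype.card_coe] at h
  rw [show (fun e => (monomial e (1:ℂ) : P3)) '' ↑E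
    = Set.range (fun x : ↑E => (monomial (↑x) (1:ℂ) : P3)) from Set.image_eq_range _ _]
  exact h

instance (d k : ℕ) : Module.Finite ℂ (Tsub d k) :=
  FiniteDimensional.span_of_finite ℂ (Set.Finite.image _ (Finset.finite_toSet _))

instance (d : ℕ) : Module.Finite ℂ (Csub d) :=
  FiniteDimensional.span_of_finite ℂ (Set.Finite.image _ (Finset.finite_toSet _))

@[simp] lemma sub2_X0 : sub2 (X 0) = X 0 := by
  show aeval _ (X 0) = _; rw [aeval_X]; simp
@[simp] lemma sub2_X1 : sub2 (X 1) = X 1 := by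
  show aeval _ (X 1) = _; rw [aeval_X]; simp
@[simp] lemma sub2_X2 : sub2 (X 2) = 0 := by
  show aeval _ (X 2) = _; rw [aeval_X]; simp
@[simp] lemma sub1_X0 : sub1 (X 0) = X 0 := by
  show aeval _ (X 0) = _; rw [aeval_X]; simp
@[simp] lemma sub1_X1 : sub1 (X 1) = 0 := by
  show aeval _ (X 1) = _; rw [aeval_X]; simp

lemma X_mul_monomial' (i : Fin 3) (e : Fin 3 →₀ ℕ) (r : ℂ) :
    X i * monomial e r = monomial (e + Finsupp.single i 1) r := by
  rw [← pow_one (X i : P3), X_pow_eq_monomial, monomial_mul, one_mul, add_comm]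

lemma hc_monomial_ne {n a b : ℕ} (r : ℂ) (h : n ≠ a + b) :
    homogeneousComponent n (monomial (mk2 a b) r : P2) = 0 := by
  rw [homogeneousComponent_of_mem (n := a + b)
    (isHomogeneous_monomial r (show (mk2 a b).degree = a + b by rw [degree2]; simp)), if_neg h]

lemma vanish_mul_X {E : Finset (Fin 3 →₀ ℕ)} (i : Fin 3) {g : P3}
    (hg : g ∈ Submodule.span ℂ ((fun e => (monomial e (1:ℂ) : P3)) '' ↑E)) (n : ℕ)
    (h : ∀ e ∈ E, n ≠ (e 0 + Finsupp.single i 1 0) + (e 1 + Finsupp.single i 1 1)) :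
    homogeneousComponent n (dehom (X i * g)) = 0 := by
  set L : P3 →ₗ[ℂ] P2 :=
    (homogeneousComponent n).comp (dehom.comp (LinearMap.mulLeft ℂ (X i : P3)))
  have hle : Submodule.span ℂ ((fun e => (monomial e (1:ℂ) : P3)) '' ↑E) ≤ LinearMap.ker L := by
    rw [Submodule.span_le]
    rintro _ ⟨e, he, rfl⟩
    rw [SetLike.mem_coe, LinearMap.mem_ker]
    simp only [L, LinearMap.coe_comp, Function.comp_apply, LinearMap.mulLeft_apply]
    rw [X_mul_monomial', dehom_monomial, Finsupp.add_apply, Finsupp.add_apply]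
    exact hc_monomial_ne _ (h e (Finset.mem_coe.mp he))
  exact hle hg

lemma Tsub_homog {d k : ℕ} {g : P3} (hg : g ∈ Tsub d k) : g.IsHomogeneous d := by
  have hle : Tsub d k ≤ homogeneousSubmodule (Fin 3) ℂ d := by
    rw [Tsub, Submodule.span_le]
    rintro _ ⟨e, he, rfl⟩
    rw [SetLike.mem_coe, mem_homogeneousSubmodule]
    refine isHomogeneous_monomial _ ?_
    rw [degree3]
    exact (mem_TF.mp (Finset.mem_coe.mp he)).1
  exact hle hg

lemma Csub_homog {d : ℕ} {g : P3} (hg : g ∈ Csub d) : g.IsHomogeneous d := by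
  have hle : Csub d ≤ homogeneousSubmodule (Fin 3) ℂ d := by
    rw [Csub, Submodule.span_le]
    rintro _ ⟨e, he, rfl⟩
    rw [SetLike.mem_coe, mem_homogeneousSubmodule]
    refine isHomogeneous_monomial _ ?_
    rw [degree3]
    have := mem_CF.mp (Finset.mem_coe.mp he)
    omega
  exact hle hg

noncomputable def Phi (d k : ℕ) : (Tsub d k × Tsub d k × Csub d) →ₗ[ℂ] (Fin 3 → P3) where
  toFun g := ![X 2 * ↑g.1 + X 1 * ↑g.2.2, X 2 * ↑g.2.1 - X 0 * ↑g.2.2,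
    -(X 0 * ↑g.1 + X 1 * ↑g.2.1)]
  map_add' a b := by
    funext i
    fin_cases i <;> simp <;> ring
  map_smul' r a := by
    funext i
    fin_cases i <;> simp [smul_sub, smul_add] <;> ring

lemma Phi_injective (d k : ℕ) : Function.Injective (Phi d k) := by
  rw [← LinearMap.ker_eq_bot, Submodule.eq_bot_iff]
  rintro ⟨g0, g1, c⟩ hg
  rw [LinearMap.mem_ker] at hg
  have h0 := congrFun hg 0
  have h1 := congrFun hg 1
  simp only [Phi, LinearMap.coe_mk, AddHom.coe_mk, Matrix.cons_val_zero, Matrix.cons_val_one,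
    Matrix.head_cons, Pi.zero_apply] at h0 h1
  have hcfix : sub2 (c : P3) = (c : P3) := by
    refine sub2_eq_self fun e he => ?_
    have := support_subset_of_mem_span c.2 (Finset.mem_coe.mpr he)
    exact (mem_CF.mp (Finset.mem_coe.mp this)).2
  have hc0 : (c : P3) = 0 := by
    have h2 := congrArg sub2 h0
    rw [map_add, map_mul, map_mul, sub2_X2, sub2_X1, zero_mul, zero_add, hcfix, map_zero] at h2
    rcases mul_eq_zero.mp h2 with h | h
    · exact absurd h (X_ne_zero 1)
    · exact h
  have hg0 : (g0 : P3) = 0 := by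
    rw [hc0, mul_zero, add_zero] at h0
    rcases mul_eq_zero.mp h0 with h | h
    · exact absurd h (X_ne_zero 2)
    · exact h
  have hg1 : (g1 : P3) = 0 := by
    rw [hc0, mul_zero, sub_zero] at h1
    rcases mul_eq_zero.mp h1 with h | h
    · exact absurd h (X_ne_zero 2)
    · exact h
  refine Prod.ext (Subtype.ext hg0) (Prod.ext (Subtype.ext hg1) (Subtype.ext hc0))

lemma Phi_mem (d k : ℕ) (hk2 : k ≤ d + 1) (g : Tsub d k × Tsub d k × Csub d) :
    Phi d k g ∈ MkFiber d k := by
  obtain ⟨g0, g1, c⟩ := g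
  have hg0 := Tsub_homog g0.2
  have hg1 := Tsub_homog g1.2
  have hc := Csub_homog c.2
  have happ : ∀ i : Fin 3, Phi d k (g0, g1, c) i =
      ![X 2 * (g0 : P3) + X 1 * (c : P3), X 2 * (g1 : P3) - X 0 * (c : P3), -(X 0 * (g0 : P3) + X 1 * (g1 : P3))] i := fun i => rfl
  rw [MkFiber, Submodule.mem_inf, Submodule.mem_inf, foliationSpace, Submodule.mem_inf]
  refine ⟨⟨⟨?_, ?_⟩, ?_⟩, ?_⟩
  · -- homogeneity
    rw [Submodule.mem_iInf]
    intro i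
    rw [Submodule.mem_comap]
    show Phi d k (g0, g1, c) i ∈ homogeneousSubmodule (Fin 3) ℂ (d+1)
    have hX : ∀ j : Fin 3, (X j : P3).IsHomogeneous 1 := fun j => isHomogeneous_X ℂ j
    have hmul : ∀ (j : Fin 3) (p : P3), p.IsHomogeneous d → (X j * p).IsHomogeneous (d+1) := by
      intro j p hp
      have := (hX j).mul hp
      rwa [add_comm] at this
    fin_cases i <;> rw [happ] <;> simp only [Matrix.cons_val_zero, Matrix.cons_val_one,
      Matrix.head_cons, Matrix.cons_val_two, Matrix.tail_cons]
    · exact Submodule.add_mem _ (hmul 2 _ hg0) (hmul 1 _ hc)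
    · exact Submodule.sub_mem _ (hmul 2 _ hg1) (hmul 0 _ hc)
    · exact Submodule.neg_mem _ (Submodule.add_mem _ (hmul 0 _ hg0) (hmul 1 _ hg1))
  · -- Euler
    rw [LinearMap.mem_ker]
    show eulerMap ![X 2 * (g0 : P3) + X 1 * (c : P3), X 2 * (g1 : P3) - X 0 * (c : P3), -(X 0 * (g0 : P3) + X 1 * (g1 : P3))] = 0
    rw [eulerMap]
    simp only [LinearMap.sum_apply, LinearMap.add_apply, LinearMap.comp_apply,
      LinearMap.proj_apply, LinearMap.mulRight_apply, Fin.sum_univ_three, Matrix.cons_val_zero,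
      Matrix.cons_val_one, Matrix.head_cons, Matrix.cons_val_two, Matrix.tail_cons]
    ring
  · -- vanishing of first coordinate
    rw [Submodule.mem_comap, vanishToOrder, Submodule.mem_iInf]
    intro n
    rw [Submodule.mem_iInf]
    intro hn
    rw [Finset.mem_range] at hn
    rw [LinearMap.mem_ker]
    show homogeneousComponent n (dehom (Phi d k (g0, g1, c) 0)) = 0
    rw [happ]
    simp only [Matrix.cons_val_zero]
    rw [map_add, map_add]
    rw [vanish_mul_X 2 g0.2 n ?_, vanish_mul_X 1 c.2 n ?_, add_zero]
    · intro e he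
      have := mem_CF.mp he
      simp only [Finsupp.single_apply]
      norm_num
      omega
    · intro e he
      have := mem_TF.mp he
      simp only [Finsupp.single_apply]
      norm_num
      omega
  · -- vanishing of second coordinate
    rw [Submodule.mem_comap, vanishToOrder, Submodule.mem_iInf]
    intro n
    rw [Submodule.mem_iInf]
    intro hn
    rw [Finset.mem_range] at hn
    rw [LinearMap.mem_ker]
    show homogeneousComponent n (dehom (Phi d k (g0, g1, c) 1)) = 0
    rw [happ]
    simp only [Matrix.cons_val_one, Matrix.cons_val_zero, Matrix.head_cons]
    rw [sub_eq_add_neg, map_add, map_add, map_neg, map_neg]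
    rw [vanish_mul_X 2 g1.2 n ?_, vanish_mul_X 0 c.2 n ?_, neg_zero, add_zero]
    · intro e he
      have := mem_CF.mp he
      simp only [Finsupp.single_apply]
      norm_num
      omega
    · intro e he
      have := mem_TF.mp he
      simp only [Finsupp.single_apply]
      norm_num
      omega

lemma coeff_dehom_of_homog {D : ℕ} {p : P3} (hp : p.IsHomogeneous D) {f : Fin 3 →₀ ℕ}
    (hf : f 0 + f 1 + f 2 = D) :
    coeff (mk2 (f 0) (f 1)) (dehom p) = coeff f p := by
  have hde : dehom p = ∑ e ∈ p.support, monomial (mk2 (e 0) (e 1)) (coeff e p) := by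
    conv_lhs => rw [p.as_sum]
    rw [map_sum]
    exact Finset.sum_congr rfl fun e _ => dehom_monomial e _
  rw [hde, coeff_sum]
  have step : ∀ e ∈ p.support,
      coeff (mk2 (f 0) (f 1)) (monomial (mk2 (e 0) (e 1)) (coeff e p))
        = if e = f then coeff e p else 0 := by
    intro e he
    rw [coeff_monomial]
    by_cases hef : e = f
    · subst hef; rw [if_pos rfl, if_pos rfl]
    · rw [if_neg hef, if_neg ?_]
      intro hmk
      apply hef
      have h0 := congrArg (fun u => u 0) hmk
      have h1 := congrArg (fun u => u 1) hmk
      simp only [mk2_apply0, mk2_apply1] at h0 h1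
      have hdeg : e 0 + e 1 + e 2 = D := by
        by_contra hne
        exact (MvPolynomial.mem_support_iff.mp he)
          (hp.coeff_eq_zero (by rw [degree3]; exact hne))
      rw [eq_mk3 e, eq_mk3 f, h0, h1, show e 2 = f 2 by omega]
  rw [Finset.sum_congr rfl step, Finset.sum_ite_eq' p.support f (fun e => coeff e p)]
  by_cases hfs : f ∈ p.support
  · rw [if_pos hfs]
  · rw [if_neg hfs, (MvPolynomial.notMem_support_iff.mp hfs)]

lemma coeff_vanish {D k : ℕ} {p : P3} (hp : p.IsHomogeneous D)
    (hv : dehom p ∈ vanishToOrder k) {f : Fin 3 →₀ ℕ} (hf : f 0 + f 1 < k) : coeff f p = 0 := by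
  by_cases hd : f 0 + f 1 + f 2 = D
  · have hn : homogeneousComponent (f 0 + f 1) (dehom p) = 0 := by
      rw [vanishToOrder, Submodule.mem_iInf] at hv
      have h1 := hv (f 0 + f 1)
      rw [Submodule.mem_iInf] at h1
      exact LinearMap.mem_ker.mp (h1 (Finset.mem_range.mpr hf))
    rw [← coeff_dehom_of_homog hp hd,
      show coeff (mk2 (f 0) (f 1)) (dehom p)
        = coeff (mk2 (f 0) (f 1)) (homogeneousComponent (f 0 + f 1) (dehom p)) by
          rw [coeff_homogeneousComponent, if_pos (by rw [degree2]; simp)],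
      hn, coeff_zero]
  · exact hp.coeff_eq_zero (by rw [degree3]; exact hd)

lemma mkfiber_le_range (d k : ℕ) : MkFiber d k ≤ LinearMap.range (Phi d k) := by
  intro a ha
  rw [MkFiber, Submodule.mem_inf, Submodule.mem_inf, foliationSpace, Submodule.mem_inf] at ha
  obtain ⟨⟨⟨hhom, hker⟩, hv0⟩, hv1⟩ := ha
  rw [Submodule.mem_iInf] at hhom
  have hhom' : ∀ i : Fin 3, (a i).IsHomogeneous (d+1) := fun i => hhom i
  rw [Submodule.mem_comap] at hv0 hv1
  have hv0' : dehom (a 0) ∈ vanishToOrder k := hv0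
  have hv1' : dehom (a 1) ∈ vanishToOrder k := hv1
  have hE : a 0 * X 0 + a 1 * X 1 + a 2 * X 2 = 0 := by
    have h := LinearMap.mem_ker.mp hker
    rw [eulerMap] at h
    simpa only [LinearMap.sum_apply, LinearMap.add_apply, LinearMap.comp_apply,
      LinearMap.proj_apply, LinearMap.mulRight_apply, Fin.sum_univ_three] using h
  have hsupp0 : ∀ e ∈ (a 0).support, e 0 + e 1 + e 2 = d + 1 ∧ k ≤ e 0 + e 1 := by
    intro e he
    constructor
    · by_contra hne
      exact (MvPolynomial.mem_support_iff.mp he)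
        ((hhom' 0).coeff_eq_zero (by rw [degree3]; exact hne))
    · by_contra hlt
      exact (MvPolynomial.mem_support_iff.mp he)
        (coeff_vanish (hhom' 0) hv0' (by omega))
  have hsupp1 : ∀ e ∈ (a 1).support, e 0 + e 1 + e 2 = d + 1 ∧ k ≤ e 0 + e 1 := by
    intro e he
    constructor
    · by_contra hne
      exact (MvPolynomial.mem_support_iff.mp he)
        ((hhom' 1).coeff_eq_zero (by rw [degree3]; exact hne))
    · by_contra hlt
      exact (MvPolynomial.mem_support_iff.mp he)
        (coeff_vanish (hhom' 1) hv1' (by omega))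
  set g0 := (a 0).divMonomial (Finsupp.single 2 1) with hg0def
  set g1 := (a 1).divMonomial (Finsupp.single 2 1) with hg1def
  set A0 := sub2 (a 0) with hA0def
  set A1 := sub2 (a 1) with hA1def
  have hd0 : a 0 = X 2 * g0 + A0 := decomp2 _
  have hd1 : a 1 = X 2 * g1 + A1 := decomp2 _
  have hz : A0 * X 0 + A1 * X 1 = 0 := by
    have h2 := congrArg sub2 hE
    rw [map_add, map_add, map_mul, map_mul, map_mul, sub2_X0, sub2_X1, sub2_X2, mul_zero,
      add_zero, map_zero] at h2
    exact h2
  have hsubA0 : sub1 A0 = 0 := by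
    have h2 := congrArg sub1 hz
    rw [map_add, map_mul, map_mul, sub1_X0, sub1_X1, mul_zero, add_zero, map_zero] at h2
    rcases mul_eq_zero.mp h2 with h | h
    · exact h
    · exact absurd h (X_ne_zero 0)
  set c := A0.divMonomial (Finsupp.single 1 1) with hcdef
  have hA0 : A0 = X 1 * c := by
    have h2 := decomp1 A0
    rw [hsubA0, add_zero] at h2
    exact h2
  have hA1 : A1 = -(X 0 * c) := by
    have h2 : X 1 * (X 0 * c + A1) = 0 := by
      rw [hA0] at hz
      linear_combination hz
    rcases mul_eq_zero.mp h2 with h | h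
    · exact absurd h (X_ne_zero 1)
    · exact eq_neg_of_add_eq_zero_right h
  have ha2 : a 2 = -(X 0 * g0 + X 1 * g1) := by
    have h2 : X 2 * (a 2 + (X 0 * g0 + X 1 * g1)) = 0 := by
      rw [hd0, hd1, hA0, hA1] at hE
      linear_combination hE
    rcases mul_eq_zero.mp h2 with h | h
    · exact absurd h (X_ne_zero 2)
    · exact eq_neg_of_add_eq_zero_left h
  have hg0mem : g0 ∈ Tsub d k := by
    refine mem_span_monomial fun e he => ?_
    rw [Finset.mem_coe, MvPolynomial.mem_support_iff, hg0def, coeff_divMonomial] at he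
    have := hsupp0 _ (MvPolynomial.mem_support_iff.mpr he)
    simp only [Finsupp.add_apply, Finsupp.single_eq_same,
      Finsupp.single_eq_of_ne' (by decide : (2:Fin 3) ≠ 0),
      Finsupp.single_eq_of_ne' (by decide : (2:Fin 3) ≠ 1), add_zero, zero_add] at this
    exact Finset.mem_coe.mpr (mem_TF.mpr (by omega))
  have hg1mem : g1 ∈ Tsub d k := by
    refine mem_span_monomial fun e he => ?_
    rw [Finset.mem_coe, MvPolynomial.mem_support_iff, hg1def, coeff_divMonomial] at he
    have := hsupp1 _ (MvPolynomial.mem_support_iff.mpr he)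
    simp only [Finsupp.add_apply, Finsupp.single_eq_same,
      Finsupp.single_eq_of_ne' (by decide : (2:Fin 3) ≠ 0),
      Finsupp.single_eq_of_ne' (by decide : (2:Fin 3) ≠ 1), add_zero, zero_add] at this
    exact Finset.mem_coe.mpr (mem_TF.mpr (by omega))
  have hcmem : c ∈ Csub d := by
    refine mem_span_monomial fun e he => ?_
    rw [Finset.mem_coe, MvPolynomial.mem_support_iff, hcdef, coeff_divMonomial] at he
    have he2 : e 2 = 0 := by
      by_contra hne
      apply he
      rw [hA0def, sub2_eq_modMonomial, coeff_modMonomial_of_le]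
      rw [Finsupp.single_le_iff, Finsupp.add_apply,
        Finsupp.single_eq_of_ne' (by decide : (1:Fin 3) ≠ 2), zero_add]
      omega
    have hcoeffa : coeff ((Finsupp.single 1 1) + e) (a 0) ≠ 0 := by
      intro hzero
      apply he
      rw [hA0def, sub2_eq_modMonomial, coeff_modMonomial_of_not_le, hzero]
      rw [Finsupp.single_le_iff, Finsupp.add_apply,
        Finsupp.single_eq_of_ne' (by decide : (1:Fin 3) ≠ 2), zero_add]
      omega
    have := hsupp0 _ (MvPolynomial.mem_support_iff.mpr hcoeffa)
    simp only [Finsupp.add_apply, Finsupp.single_eq_same,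
      Finsupp.single_eq_of_ne' (by decide : (1:Fin 3) ≠ 0),
      Finsupp.single_eq_of_ne' (by decide : (1:Fin 3) ≠ 2), add_zero, zero_add] at this
    exact Finset.mem_coe.mpr (mem_CF.mpr (by omega))
  refine ⟨(⟨g0, hg0mem⟩, ⟨g1, hg1mem⟩, ⟨c, hcmem⟩), ?_⟩
  funext i
  have happ : ∀ i : Fin 3, Phi d k (⟨g0, hg0mem⟩, ⟨g1, hg1mem⟩, ⟨c, hcmem⟩) i =
      ![X 2 * g0 + X 1 * c, X 2 * g1 - X 0 * c, -(X 0 * g0 + X 1 * g1)] i := fun i => rfl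
  rw [happ]
  fin_cases i
  · show X 2 * g0 + X 1 * c = a 0
    rw [hd0, hA0]
  · show X 2 * g1 - X 0 * c = a 1
    rw [hd1, hA1]; ring
  · show -(X 0 * g0 + X 1 * g1) = a 2
    rw [ha2]

theorem dim_MkFiber (d k : ℕ) (hk1 : 1 ≤ k) (hk2 : k ≤ d + 1) :
    Module.finrank ℂ (MkFiber d k) = d ^ 2 + 4 * d + 3 - k * (k + 1) := by
  have hrange : LinearMap.range (Phi d k) = MkFiber d k := by
    apply le_antisymm
    · rintro _ ⟨g, rfl⟩
      exact Phi_mem d k hk2 g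
    · exact mkfiber_le_range d k
  rw [← hrange,
    ← (LinearEquiv.ofInjective (Phi d k) (Phi_injective d k)).finrank_eq,
    Module.finrank_prod, Module.finrank_prod]
  have hT : Module.finrank ℂ (Tsub d k) = (TF d k).card := finrank_span_monomials _
  have hC : Module.finrank ℂ (Csub d) = (CF d).card := finrank_span_monomials _
  rw [hT, hC, card_CF]
  have h2 := card_TF (d := d) (k := k) hk2
  have hle : k * (k+1) ≤ (d+1)*(d+2) := Nat.mul_le_mul hk2 (by omega)
  have hd : d^2 + 4*d + 3 = (d+1)*(d+2) + (d+1) := by ring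
  rw [hd]
  generalize hA : k*(k+1) = A at h2 hle ⊢
  generalize hB : (d+1)*(d+2) = B at h2 hle ⊢
  omega
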